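/- Let P := {x ∈ ℝⁿ | ∃ y ∈ ℝᵖ, Ax + By ≤ c}, let e_1,…,e_k ∈ P be linearly independent, and suppose the system: e_i^T x = 0 for i=1,…,k; x = x⁺ − x⁻; Ax⁺ + By⁺ ≤ λ⁺ c; Ax⁻ + By⁻ ≤ λ⁻ c; λ⁺ ≥ 0; λ⁻ ≥ 0 has a solution with x ≠ 0. Then the span of P has dimension at least k+1. -/

import Mathlib

theorem span_dim_ge_of_feasible_system (n p m k : ℕ)
    (A : Matrix (Fin m) (Fin n) ℝ) (B : Matrix (Fin m) (Fin p) ℝ) (c : Fin m → ℝ)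
    (P : Set (Fin n → ℝ))
    (hP : P = {x | ∃ y : Fin p → ℝ, A.mulVec x + B.mulVec y ≤ c})
    (hPne : P.Nonempty)
    (e : Fin k → (Fin n → ℝ)) (heP : ∀ i, e i ∈ P) (hind : LinearIndependent ℝ e)
    (hsol : ∃ (x xp xm : Fin n → ℝ) (yp ym : Fin p → ℝ) (lp lm : ℝ),
      x ≠ 0 ∧ (∀ i, dotProduct (e i) x = 0) ∧ x = xp - xm ∧
      A.mulVec xp + B.mulVec yp ≤ lp • c ∧
      A.mulVec xm + B.mulVec ym ≤ lm • c ∧ 0 ≤ lp ∧ 0 ≤ lm) :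
    k + 1 ≤ Module.finrank ℝ (Submodule.span ℝ P) := by
  obtain ⟨x, xp, xm, yp, ym, lp, lm, hx0, hort, hxd, hple, hmle, hlp, hlm⟩ := hsol
  set S := Submodule.span ℝ P with hS
  obtain ⟨x0, hx0P⟩ := hPne
  obtain ⟨y0, hy0⟩ : ∃ y : Fin p → ℝ, A.mulVec x0 + B.mulVec y ≤ c := by
    rw [hP] at hx0P; exact hx0P
  have key : ∀ (u : Fin n → ℝ) (w : Fin p → ℝ) (l : ℝ), 0 ≤ l →
      A.mulVec u + B.mulVec w ≤ l • c → u ∈ S := by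
    intro u w l hl hle
    rcases hl.eq_or_lt with h0 | hpos
    · have hmem : x0 + u ∈ P := by
        rw [hP]
        refine ⟨y0 + w, ?_⟩
        have h1 : A.mulVec (x0 + u) + B.mulVec (y0 + w)
            = (A.mulVec x0 + B.mulVec y0) + (A.mulVec u + B.mulVec w) := by
          rw [Matrix.mulVec_add, Matrix.mulVec_add]; abel
        rw [h1]
        have h2 : A.mulVec u + B.mulVec w ≤ 0 := by
          rwa [← h0, zero_smul] at hle
        calc (A.mulVec x0 + B.mulVec y0) + (A.mulVec u + B.mulVec w)
            ≤ c + 0 := add_le_add hy0 h2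
          _ = c := add_zero c
      have hu : u = (x0 + u) - x0 := by abel
      rw [hu]
      exact Submodule.sub_mem _ (Submodule.subset_span hmem) (Submodule.subset_span hx0P)
    · have hmem : l⁻¹ • u ∈ P := by
        rw [hP]
        refine ⟨l⁻¹ • w, ?_⟩
        have h1 : A.mulVec (l⁻¹ • u) + B.mulVec (l⁻¹ • w)
            = l⁻¹ • (A.mulVec u + B.mulVec w) := by
          rw [Matrix.mulVec_smul, Matrix.mulVec_smul, smul_add]
        rw [h1]
        have h2 : l⁻¹ • (A.mulVec u + B.mulVec w) ≤ l⁻¹ • (l • c) :=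
          smul_le_smul_of_nonneg_left hle (inv_nonneg.2 hl)
        rwa [smul_smul, inv_mul_cancel₀ hpos.ne', one_smul] at h2
      have hu : u = l • (l⁻¹ • u) := by
        rw [smul_smul, mul_inv_cancel₀ hpos.ne', one_smul]
      rw [hu]
      exact Submodule.smul_mem _ _ (Submodule.subset_span hmem)
  have hxS : x ∈ S := by
    rw [hxd]
    exact Submodule.sub_mem _ (key xp yp lp hlp hple) (key xm ym lm hlm hmle)
  have heS : ∀ i, e i ∈ S := fun i => Submodule.subset_span (heP i)
  have hxns : x ∉ Submodule.span ℝ (Set.range e) := by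
    intro hx
    have hz : ∀ v ∈ Submodule.span ℝ (Set.range e), dotProduct v x = 0 := by
      intro v hv
      induction hv using Submodule.span_induction with
      | mem v hv => obtain ⟨i, rfl⟩ := hv; exact hort i
      | zero => simp
      | add a b _ _ ha hb => rw [add_dotProduct, ha, hb, add_zero]
      | smul r a _ ha => rw [smul_dotProduct, ha, smul_zero]
    have hxx := hz x hx
    exact hx0 ((dotProduct_self_eq_zero).1 hxx)
  have h1 : LinearIndependent ℝ (Fin.cons x e : Fin (k + 1) → Fin n → ℝ) :=
    (linearIndependent_fin_cons).2 ⟨hind, hxns⟩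
  let f : Fin (k + 1) → S := Fin.cons ⟨x, hxS⟩ (fun i => ⟨e i, heS i⟩)
  have hcomp : (S.subtype ∘ f) = Fin.cons x e := by
    funext i
    refine Fin.cases ?_ ?_ i <;> simp [f]
  have hf : LinearIndependent ℝ f := by
    apply LinearIndependent.of_comp S.subtype
    rw [hcomp]; exact h1
  have := hf.fintype_card_le_finrank
  simpa using this
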